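/- (Denominator Reduction.) Let N ≥ 1, let q ≥ 2 be an integer, let n be an integer with n ≥ ⌈log_q N⌉, and let x_0, …, x_{N−1} be nonnegative integers with ∑_k x_k = q^n. For each integer k with 2 ≤ k ≤ q let v_k be the probability vector on N states with value (k−1)/k at state 0, value 1/k at state N−1, and 0 elsewhere. Then (x_0/q^n, …, x_{N−1}/q^n) is realizable from the switch set {v_k : 2 ≤ k ≤ q} with at most (N−1)(q−1)(n − ⌈log_q N⌉) + q^{⌈log_q N⌉} − 1 pswitches. -/

import Mathlib

noncomputable section

/-- Series composition: distribution of `min` of two independent states. -/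
def smin {N : ℕ} (p q : Fin N → ℝ) : Fin N → ℝ :=
  fun k => ∑ i, ∑ j, if min i j = k then p i * q j else 0

/-- Parallel composition: distribution of `max` of two independent states. -/
def smax {N : ℕ} (p q : Fin N → ℝ) : Fin N → ℝ :=
  fun k => ∑ i, ∑ j, if max i j = k then p i * q j else 0

/-- The point mass at state `s`. -/
def delta {N : ℕ} (s : Fin N) : Fin N → ℝ := fun i => if i = s then 1 else 0

/-- `Realizable S p m`: the vector `p` is obtained from point masses (0 pswitches)
and elements of the switch set `S` (1 pswitch each) by series and parallel
compositions, using `m` pswitches in total. -/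
inductive Realizable {N : ℕ} (S : Set (Fin N → ℝ)) : (Fin N → ℝ) → ℕ → Prop
  | point (s : Fin N) : Realizable S (delta s) 0
  | single {p : Fin N → ℝ} : p ∈ S → Realizable S p 1
  | series {p q : Fin N → ℝ} {a b : ℕ} :
      Realizable S p a → Realizable S q b → Realizable S (smin p q) (a + b)
  | parallel {p q : Fin N → ℝ} {a b : ℕ} :
      Realizable S p a → Realizable S q b → Realizable S (smax p q) (a + b)

/-- The `N`-state ½-pswitch: probability ½ on state `0`, ½ on state `N-1`,
and `0` elsewhere. -/
def halfSwitch (N : ℕ) : Fin N → ℝ :=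
  fun i => (if (i : ℕ) = 0 then (1 : ℝ) / 2 else 0) + (if (i : ℕ) = N - 1 then (1 : ℝ) / 2 else 0)

/-- The complexity function `f(n,N)`: `2^n - 1` for `n ≤ ⌈log₂ N⌉` and
`(N-1)(n - ⌈log₂ N⌉) + 2^{⌈log₂ N⌉} - 1` for `n ≥ ⌈log₂ N⌉`. -/
def f (n N : ℕ) : ℕ :=
  if n ≤ Nat.clog 2 N then 2 ^ n - 1
  else (N - 1) * (n - Nat.clog 2 N) + 2 ^ (Nat.clog 2 N) - 1

/-- The pswitch `v_k`: probability `(k-1)/k` on state `0`, `1/k` on state `N-1`,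
and `0` elsewhere. -/
def qSwitch (N k : ℕ) : Fin N → ℝ :=
  fun i => (if (i : ℕ) = 0 then ((k : ℝ) - 1) / k else 0) +
    (if (i : ℕ) = N - 1 then 1 / (k : ℝ) else 0)

/-! ### Auxiliary development -/

namespace DenomRed

variable {N : ℕ}

/-- Survival function with natural-number threshold. -/
def surv (p : Fin N → ℝ) (t : ℕ) : ℝ := ∑ i : Fin N, if t ≤ (i : ℕ) then p i else 0

lemma surv_zero (p : Fin N → ℝ) : surv p 0 = ∑ i, p i := by
  simp [surv]

lemma surv_of_ge (p : Fin N → ℝ) {t : ℕ} (ht : N ≤ t) : surv p t = 0 := by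
  apply Finset.sum_eq_zero
  intro i _
  have := i.isLt
  rw [if_neg (by omega)]

lemma surv_sub (p : Fin N → ℝ) (i : Fin N) :
    surv p i.val - surv p (i.val + 1) = p i := by
  unfold surv
  rw [← Finset.sum_sub_distrib]
  have : ∀ j : Fin N,
      ((if i.val ≤ (j : ℕ) then p j else 0) - (if i.val + 1 ≤ (j : ℕ) then p j else 0))
        = if j = i then p j else 0 := by
    intro j
    rcases lt_trichotomy (j : ℕ) (i : ℕ) with h | h | h
    · rw [if_neg (by omega), if_neg (by omega), if_neg (by intro he; rw [he] at h; omega)]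
      ring
    · rw [if_pos (by omega), if_neg (by omega), if_pos (Fin.ext h)]
      ring
    · rw [if_pos (by omega), if_pos (by omega), if_neg (by intro he; rw [he] at h; omega)]
      ring
  rw [Finset.sum_congr rfl (fun j _ => this j), Finset.sum_ite_eq' Finset.univ i p,
    if_pos (Finset.mem_univ i)]

lemma eq_of_surv {p r : Fin N → ℝ} (h : ∀ t, surv p t = surv r t) : p = r := by
  funext i
  rw [← surv_sub p i, ← surv_sub r i, h, h]

lemma surv_add (a b : ℝ) (p r : Fin N → ℝ) (t : ℕ) :
    surv (fun i => a * p i + b * r i) t = a * surv p t + b * surv r t := by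
  unfold surv
  rw [Finset.mul_sum, Finset.mul_sum, ← Finset.sum_add_distrib]
  apply Finset.sum_congr rfl
  intro i _
  split_ifs <;> ring

lemma surv_smin (p r : Fin N → ℝ) (t : ℕ) :
    surv (smin p r) t = surv p t * surv r t := by
  unfold surv smin
  rw [Finset.sum_mul_sum]
  have step1 : ∀ k : Fin N, (if t ≤ (k : ℕ) then
      (∑ i : Fin N, ∑ j : Fin N, if min i j = k then p i * r j else 0) else 0)
      = ∑ i : Fin N, ∑ j : Fin N, if min i j = k ∧ t ≤ (k : ℕ) then p i * r j else 0 := by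
    intro k
    split_ifs with h
    · exact Finset.sum_congr rfl fun i _ => Finset.sum_congr rfl fun j _ => by simp [h]
    · symm
      exact Finset.sum_eq_zero fun i _ => Finset.sum_eq_zero fun j _ => by simp [h]
  rw [Finset.sum_congr rfl fun k _ => step1 k, Finset.sum_comm]
  apply Finset.sum_congr rfl
  intro i _
  rw [Finset.sum_comm]
  apply Finset.sum_congr rfl
  intro j _
  have hinner : (∑ k : Fin N, if min i j = k ∧ t ≤ (k : ℕ) then p i * r j else 0)
      = if t ≤ ((min i j : Fin N) : ℕ) then p i * r j else 0 := by
    rw [Finset.sum_eq_single (min i j)]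
    · by_cases h : t ≤ ((min i j : Fin N) : ℕ) <;> simp [h]
    · intro k _ hk
      rw [if_neg (by tauto)]
    · intro h
      exact absurd (Finset.mem_univ _) h
  rw [hinner]
  have hval : ((min i j : Fin N) : ℕ) = min (i : ℕ) (j : ℕ) := rfl
  rw [hval]
  by_cases h1 : t ≤ (i : ℕ) <;> by_cases h2 : t ≤ (j : ℕ) <;>
    simp [h1, h2, le_min_iff]

lemma surv_smax (p r : Fin N → ℝ) (t : ℕ) :
    surv (smax p r) t
      = surv p t * (∑ j, r j) + ((∑ i, p i) - surv p t) * surv r t := by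
  unfold surv smax
  have step1 : ∀ k : Fin N, (if t ≤ (k : ℕ) then
      (∑ i : Fin N, ∑ j : Fin N, if max i j = k then p i * r j else 0) else 0)
      = ∑ i : Fin N, ∑ j : Fin N, if max i j = k ∧ t ≤ (k : ℕ) then p i * r j else 0 := by
    intro k
    split_ifs with h
    · exact Finset.sum_congr rfl fun i _ => Finset.sum_congr rfl fun j _ => by simp [h]
    · symm
      exact Finset.sum_eq_zero fun i _ => Finset.sum_eq_zero fun j _ => by simp [h]
  rw [Finset.sum_congr rfl fun k _ => step1 k, Finset.sum_comm]
  have step2 : ∀ i : Fin N, (∑ k : Fin N, ∑ j : Fin N, if max i j = k ∧ t ≤ (k : ℕ) then p i * r j else 0)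
      = ∑ j : Fin N, if t ≤ max (i : ℕ) (j : ℕ) then p i * r j else 0 := by
    intro i
    rw [Finset.sum_comm]
    apply Finset.sum_congr rfl
    intro j _
    rw [Finset.sum_eq_single (max i j)]
    · by_cases h : t ≤ ((max i j : Fin N) : ℕ) <;> simp [h] <;> rfl
    · intro k _ hk
      rw [if_neg (by tauto)]
    · intro h
      exact absurd (Finset.mem_univ _) h
  rw [Finset.sum_congr rfl fun i _ => step2 i]
  have step3 : ∀ i j : Fin N, (if t ≤ max (i : ℕ) (j : ℕ) then p i * r j else 0)
      = (if t ≤ (i : ℕ) then p i else 0) * r j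
        + (p i - (if t ≤ (i : ℕ) then p i else 0)) * (if t ≤ (j : ℕ) then r j else 0) := by
    intro i j
    by_cases h1 : t ≤ (i : ℕ) <;> by_cases h2 : t ≤ (j : ℕ) <;>
      simp [h1, h2, le_max_iff] <;> ring
  rw [Finset.sum_congr rfl fun i _ => Finset.sum_congr rfl fun j _ => step3 i j]
  have hsub : ((∑ i : Fin N, p i) - ∑ i : Fin N, if t ≤ (i : ℕ) then p i else 0)
      = ∑ i : Fin N, (p i - if t ≤ (i : ℕ) then p i else 0) := (Finset.sum_sub_distrib _ _).symm
  rw [hsub]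
  rw [Finset.sum_mul_sum, Finset.sum_mul_sum]
  rw [← Finset.sum_add_distrib]
  exact Finset.sum_congr rfl fun i _ => Finset.sum_add_distrib

lemma surv_qSwitch (hN : 1 ≤ N) (k : ℕ) (t : ℕ) :
    surv (qSwitch N k) t
      = (if t = 0 then ((k : ℝ) - 1) / k else 0) + (if t ≤ N - 1 then 1 / (k : ℝ) else 0) := by
  unfold surv qSwitch
  have hsplit : ∀ i : Fin N, (if t ≤ (i : ℕ) then
      ((if (i : ℕ) = 0 then ((k : ℝ) - 1) / k else 0) + (if (i : ℕ) = N - 1 then 1 / (k : ℝ) else 0)) else 0)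
      = (if t ≤ (i : ℕ) ∧ (i : ℕ) = 0 then ((k : ℝ) - 1) / k else 0)
        + (if t ≤ (i : ℕ) ∧ (i : ℕ) = N - 1 then 1 / (k : ℝ) else 0) := by
    intro i
    by_cases h : t ≤ (i : ℕ) <;> simp [h]
  rw [Finset.sum_congr rfl fun i _ => hsplit i, Finset.sum_add_distrib]
  congr 1
  · rw [Finset.sum_eq_single (⟨0, by omega⟩ : Fin N)]
    · simp only []
      by_cases h : t = 0
      · rw [if_pos (by simp [h]), if_pos h]
      · rw [if_neg (by simp; omega), if_neg h]
    · intro b _ hb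
      rw [if_neg]
      intro hc
      exact hb (Fin.ext (by simpa using hc.2))
    · intro h
      exact absurd (Finset.mem_univ _) h
  · rw [Finset.sum_eq_single (⟨N - 1, by omega⟩ : Fin N)]
    · simp only []
      by_cases h : t ≤ N - 1
      · rw [if_pos (by simp [h]), if_pos h]
      · rw [if_neg (by simp; omega), if_neg h]
    · intro b _ hb
      rw [if_neg]
      intro hc
      exact hb (Fin.ext (by simpa using hc.2))
    · intro h
      exact absurd (Finset.mem_univ _) h

/-- Key mixture gadget. -/
lemma mixture (hN : 1 ≤ N) {p1 p2 : Fin N → ℝ} {k : ℕ} (hk : 1 ≤ k)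
    (h1 : ∑ i, p1 i = 1) (h2 : ∑ i, p2 i = 1)
    (hs : ∀ t, surv p1 t = 1 ∨ surv p2 t = 0) :
    smin p1 (smax p2 (qSwitch N k))
      = fun i => (1 / (k : ℝ)) * p1 i + (((k : ℝ) - 1) / k) * p2 i := by
  have hk0 : (k : ℝ) ≠ 0 := by positivity
  apply eq_of_surv
  intro t
  rw [surv_add, surv_smin, surv_smax, surv_qSwitch hN]
  have hv1 : ((if (0:ℕ) = 0 then ((k : ℝ) - 1) / k else 0) + (if (0:ℕ) ≤ N - 1 then 1 / (k : ℝ) else 0)) = 1 := by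
    rw [if_pos rfl, if_pos (by omega)]
    field_simp
    ring
  have hvsum : (∑ j, qSwitch N k j) = 1 := by
    rw [← surv_zero, surv_qSwitch hN]
    simpa using hv1
  rw [hvsum, h2]
  rcases hs t with h | h
  · rw [h]
    rcases Nat.eq_zero_or_pos t with ht0 | ht0
    · subst ht0
      rw [surv_zero, h2, if_pos rfl, if_pos (by omega)]
      field_simp
      ring
    · rw [if_neg (by omega)]
      by_cases htN : t ≤ N - 1
      · rw [if_pos htN]
        field_simp
        ring
      · have h1' : surv p1 t = 0 := surv_of_ge p1 (by omega)
        rw [h1'] at h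
        norm_num at h
  · rw [h]
    rcases Nat.eq_zero_or_pos t with ht0 | ht0
    · subst ht0
      rw [surv_zero, h2] at h
      norm_num at h
    · rw [if_neg (by omega)]
      by_cases htN : t ≤ N - 1
      · rw [if_pos htN]
        field_simp
        ring
      · rw [if_neg htN, surv_of_ge p1 (by omega)]
        ring

/-! ### Empirical distributions of monotone token maps -/

/-- Empirical distribution of `T` on the block `[a, a+L)`. -/
def empN (T : ℕ → Fin N) (a L : ℕ) : Fin N → ℝ :=
  fun i => (((Finset.Ico a (a + L)).filter (fun t => T t = i)).card : ℝ) / L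

lemma empN_sum (T : ℕ → Fin N) (a L : ℕ) (hL : L ≠ 0) :
    ∑ i, empN T a L i = 1 := by
  unfold empN
  rw [← Finset.sum_div]
  rw [← Nat.cast_sum]
  rw [← Finset.card_eq_sum_card_fiberwise (fun t _ => Finset.mem_univ (T t))]
  rw [Nat.card_Ico]
  have : a + L - a = L := by omega
  rw [this, div_self (by exact_mod_cast hL)]

lemma surv_empN (T : ℕ → Fin N) (a L t : ℕ) :
    surv (empN T a L) t
      = (((Finset.Ico a (a + L)).filter (fun t' => t ≤ (T t' : ℕ))).card : ℝ) / L := by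
  unfold surv empN
  rw [Finset.card_eq_sum_card_fiberwise
    (f := T) (t := Finset.univ) (fun t _ => Finset.mem_univ (T t))]
  rw [Nat.cast_sum, Finset.sum_div]
  apply Finset.sum_congr rfl
  intro i _
  have : ((Finset.Ico a (a + L)).filter (fun t' => t ≤ (T t' : ℕ))).filter (fun t' => T t' = i)
      = if t ≤ (i : ℕ) then (Finset.Ico a (a + L)).filter (fun t' => T t' = i) else ∅ := by
    rw [Finset.filter_filter]
    split_ifs with h
    · apply Finset.filter_congr
      intro t' _
      constructor
      · exact fun hc => hc.2
      · exact fun hc => ⟨by rw [hc]; exact h, hc⟩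
    · apply Finset.filter_false_of_mem
      intro t' _
      intro hc
      rw [hc.2] at hc
      exact h hc.1
  rw [this]
  split_ifs with h
  · rfl
  · simp

lemma surv_empN_one {T : ℕ → Fin N} (hT : Monotone T) (a L t : ℕ) (hL : L ≠ 0)
    (ht : t ≤ (T a : ℕ)) : surv (empN T a L) t = 1 := by
  rw [surv_empN]
  have : (Finset.Ico a (a + L)).filter (fun t' => t ≤ (T t' : ℕ)) = Finset.Ico a (a + L) := by
    apply Finset.filter_true_of_mem
    intro t' ht'
    have ha : a ≤ t' := (Finset.mem_Ico.mp ht').1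
    exact le_trans ht (hT ha)
  rw [this, Nat.card_Ico]
  have h2 : a + L - a = L := by omega
  rw [h2, div_self (by exact_mod_cast hL)]

lemma surv_empN_zero {T : ℕ → Fin N} (hT : Monotone T) (a L t : ℕ)
    (ht : (T (a + L - 1) : ℕ) < t) : surv (empN T a L) t = 0 := by
  rw [surv_empN]
  have : (Finset.Ico a (a + L)).filter (fun t' => t ≤ (T t' : ℕ)) = ∅ := by
    apply Finset.filter_false_of_mem
    intro t' ht'
    have ha : t' ≤ a + L - 1 := by
      have := (Finset.mem_Ico.mp ht').2
      omega
    have := hT ha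
    omega
  rw [this]
  simp

lemma empN_const {T : ℕ → Fin N} (hT : Monotone T) (a L : ℕ) (hL : L ≠ 0)
    (hc : (T (a + L - 1) : ℕ) ≤ (T a : ℕ)) : empN T a L = delta (T a) := by
  have hconst : ∀ t' ∈ Finset.Ico a (a + L), T t' = T a := by
    intro t' ht'
    rcases Finset.mem_Ico.mp ht' with ⟨h1, h2⟩
    have hu : (T t' : ℕ) ≤ (T a : ℕ) := le_trans (hT (by omega : t' ≤ a + L - 1)) hc
    have hl : (T a : ℕ) ≤ (T t' : ℕ) := hT h1
    exact Fin.ext (le_antisymm hu hl)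
  funext i
  unfold empN delta
  by_cases h : i = T a
  · subst h
    rw [Finset.filter_true_of_mem (fun t' ht' => hconst t' ht'), if_pos rfl, Nat.card_Ico]
    have h2 : a + L - a = L := by omega
    rw [h2, div_self (by exact_mod_cast hL)]
  · rw [Finset.filter_false_of_mem, if_neg h]
    · simp
    · intro t' ht' hcon
      exact h (hcon ▸ hconst t' ht')

lemma empN_split (T : ℕ → Fin N) (a L1 L2 : ℕ) (i : Fin N) :
    (((Finset.Ico a (a + (L1 + L2))).filter (fun t => T t = i)).card : ℕ)
      = ((Finset.Ico a (a + L1)).filter (fun t => T t = i)).card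
        + ((Finset.Ico (a + L1) (a + L1 + L2)).filter (fun t => T t = i)).card := by
  have hsplit : Finset.Ico a (a + (L1 + L2))
      = Finset.Ico a (a + L1) ∪ Finset.Ico (a + L1) (a + L1 + L2) := by
    rw [Finset.Ico_union_Ico_eq_Ico (by omega) (by omega)]
    congr 1
    omega
  rw [hsplit, Finset.filter_union, Finset.card_union_of_disjoint]
  exact Finset.disjoint_filter_filter (Finset.Ico_disjoint_Ico_consecutive a (a + L1) (a + L1 + L2))

/-- The main chain construction. -/
lemma chain {q : ℕ} (hq : 2 ≤ q) {T : ℕ → Fin N} (hT : Monotone T) (m a : ℕ) :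
    ∃ c ≤ (q - 1) * ∑ l ∈ Finset.range m, min (q ^ l) ((T (a + q ^ m - 1) : ℕ) - (T a : ℕ)),
      Realizable {v : Fin N → ℝ | ∃ k : ℕ, 2 ≤ k ∧ k ≤ q ∧ v = qSwitch N k}
        (empN T a (q ^ m)) c := by
  induction m generalizing a with
  | zero =>
    refine ⟨0, by simp, ?_⟩
    have hd := empN_const hT a 1 one_ne_zero (by simp)
    rw [pow_zero, hd]
    exact Realizable.point (T a)
  | succ m ih =>
    have hq0 : 0 < q := by omega
    have hQ : 0 < q ^ m := pow_pos hq0 m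
    by_cases hconst : (T (a + q ^ (m + 1) - 1) : ℕ) ≤ (T a : ℕ)
    · refine ⟨0, Nat.zero_le _, ?_⟩
      rw [empN_const hT a (q ^ (m + 1)) (pow_pos hq0 (m + 1)).ne' hconst]
      exact Realizable.point (T a)
    · have hN : 1 ≤ N := Fin.pos (T 0)
      have key : ∀ j, 1 ≤ j → j ≤ q →
          ∃ c ≤ (j - 1) + (q - 1) * ∑ l ∈ Finset.range m,
              min (j * q ^ l) ((T (a + j * q ^ m - 1) : ℕ) - (T a : ℕ)),
            Realizable {v : Fin N → ℝ | ∃ k : ℕ, 2 ≤ k ∧ k ≤ q ∧ v = qSwitch N k}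
              (empN T a (j * q ^ m)) c := by
        intro j
        induction j with
        | zero => intro h1 _; exact absurd h1 (by omega)
        | succ j ihj =>
          intro _ hjq
          rcases Nat.eq_zero_or_pos j with hj0 | hj0
          · subst hj0
            obtain ⟨c, hc, hr⟩ := ih a
            exact ⟨c, by simpa using hc, by simpa using hr⟩
          · obtain ⟨c2, hc2, hr2⟩ := ihj (by omega) (by omega)
            obtain ⟨c1, hc1, hr1⟩ := ih (a + j * q ^ m)
            have hmem : qSwitch N (j + 1) ∈
                {v : Fin N → ℝ | ∃ k : ℕ, 2 ≤ k ∧ k ≤ q ∧ v = qSwitch N k} :=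
              ⟨j + 1, by omega, by omega, rfl⟩
            have hreal := Realizable.series hr1
              (Realizable.parallel hr2 (Realizable.single hmem))
            have hjQ : 0 < j * q ^ m := Nat.mul_pos hj0 hQ
            -- the mixture identity
            have hs : ∀ t, surv (empN T (a + j * q ^ m) (q ^ m)) t = 1
                ∨ surv (empN T a (j * q ^ m)) t = 0 := by
              intro t
              by_cases h : t ≤ (T (a + j * q ^ m) : ℕ)
              · exact Or.inl (surv_empN_one hT (a + j * q ^ m) (q ^ m) t (by omega) h)
              · refine Or.inr (surv_empN_zero hT a (j * q ^ m) t ?_)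
                have hmono : (T (a + j * q ^ m - 1) : ℕ) ≤ (T (a + j * q ^ m) : ℕ) :=
                  hT (by omega)
                omega
            have hmix : smin (empN T (a + j * q ^ m) (q ^ m))
                (smax (empN T a (j * q ^ m)) (qSwitch N (j + 1)))
                = empN T a ((j + 1) * q ^ m) := by
              rw [mixture hN (by omega) (empN_sum T (a + j * q ^ m) (q ^ m) (by omega))
                (empN_sum T a (j * q ^ m) (by omega)) hs]
              funext i
              have hlen : (j + 1) * q ^ m = j * q ^ m + q ^ m := by ring
              have hcard := empN_split T a (j * q ^ m) (q ^ m) i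
              unfold empN
              rw [hlen, hcard]
              have e1 : ((j : ℝ)) ≠ 0 := by positivity
              have e2 : ((q : ℝ) ^ m) ≠ 0 := by positivity
              have e3 : ((j : ℝ) + 1) ≠ 0 := by positivity
              push_cast
              field_simp
              ring
            rw [hmix] at hreal
            refine ⟨c1 + (c2 + 1), ?_, hreal⟩
            -- cost arithmetic
            have hAB : (T a : ℕ) ≤ (T (a + j * q ^ m - 1) : ℕ) := hT (by omega)
            have hBC : (T (a + j * q ^ m - 1) : ℕ) ≤ (T (a + j * q ^ m) : ℕ) := hT (by omega)
            have hCD : (T (a + j * q ^ m) : ℕ) ≤ (T (a + j * q ^ m + q ^ m - 1) : ℕ) :=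
              hT (by omega)
            have hidx : a + (j + 1) * q ^ m = a + j * q ^ m + q ^ m := by ring
            rw [hidx]
            have hS : (∑ l ∈ Finset.range m,
                  min (q ^ l) ((T (a + j * q ^ m + q ^ m - 1) : ℕ) - (T (a + j * q ^ m) : ℕ)))
                + (∑ l ∈ Finset.range m,
                  min (j * q ^ l) ((T (a + j * q ^ m - 1) : ℕ) - (T a : ℕ)))
                ≤ ∑ l ∈ Finset.range m,
                  min ((j + 1) * q ^ l) ((T (a + j * q ^ m + q ^ m - 1) : ℕ) - (T a : ℕ)) := by
              rw [← Finset.sum_add_distrib]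
              apply Finset.sum_le_sum
              intro l _
              have : (j + 1) * q ^ l = j * q ^ l + q ^ l := by ring
              omega
            have hmul := Nat.mul_le_mul_left (q - 1) hS
            rw [Nat.mul_add (q - 1)] at hmul
            omega
      obtain ⟨c, hc, hr⟩ := key q (by omega) le_rfl
      have hpow : q * q ^ m = q ^ (m + 1) := by rw [pow_succ]; ring
      rw [hpow] at hc hr
      refine ⟨c, ?_, hr⟩
      rw [Finset.sum_range_succ']
      have hs1 : 1 ≤ ((T (a + q ^ (m + 1) - 1) : ℕ) - (T a : ℕ)) := by
        have := hT (show a ≤ a + q ^ (m + 1) - 1 by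
          have := pow_pos hq0 (m + 1)
          omega)
        omega
      have hf0 : min (q ^ 0) ((T (a + q ^ (m + 1) - 1) : ℕ) - (T a : ℕ)) = 1 := by
        simpa using by omega
      have hfl : ∀ l, min (q ^ (l + 1)) ((T (a + q ^ (m + 1) - 1) : ℕ) - (T a : ℕ))
          = min (q * q ^ l) ((T (a + q ^ (m + 1) - 1) : ℕ) - (T a : ℕ)) := by
        intro l
        rw [pow_succ]
        ring_nf
      calc c ≤ (q - 1) + (q - 1) * ∑ l ∈ Finset.range m,
            min (q ^ (l + 1)) ((T (a + q ^ (m + 1) - 1) : ℕ) - (T a : ℕ)) := by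
              rw [Finset.sum_congr rfl fun l _ => hfl l]; exact hc
        _ = (q - 1) * ((∑ l ∈ Finset.range m,
            min (q ^ (l + 1)) ((T (a + q ^ (m + 1) - 1) : ℕ) - (T a : ℕ)))
              + min (q ^ 0) ((T (a + q ^ (m + 1) - 1) : ℕ) - (T a : ℕ))) := by
              rw [hf0]; ring
        _ = _ := by rw [Nat.mul_add]

/-- Prefix sums of an extended weight vector. -/
def prefSum {N : ℕ} (x : Fin N → ℕ) : ℕ → ℕ :=
  fun i => ∑ k ∈ Finset.range i, if h : k < N then x ⟨k, h⟩ else 0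

lemma prefSum_mono {N : ℕ} (x : Fin N → ℕ) : Monotone (prefSum x) :=
  fun _ _ hij => Finset.sum_le_sum_of_subset (Finset.range_subset_range.mpr hij)

lemma prefSum_total {N : ℕ} (x : Fin N → ℕ) : prefSum x N = ∑ i, x i := by
  unfold prefSum
  rw [← Fin.sum_univ_eq_sum_range]
  exact Finset.sum_congr rfl fun i _ => by simp [i.isLt]

lemma prefSum_succ {N : ℕ} (x : Fin N → ℕ) (i : Fin N) :
    prefSum x (i.val + 1) = prefSum x i.val + x i := by
  unfold prefSum
  rw [Finset.sum_range_succ]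
  congr 1
  simp [i.isLt]

/-- A monotone token map with prescribed fiber sizes. -/
lemma exists_tokenMap {N : ℕ} (hN : 1 ≤ N) (x : Fin N → ℕ) (M : ℕ) (hx : ∑ k, x k = M) :
    ∃ T : ℕ → Fin N, Monotone T ∧
      ∀ i, ((Finset.Ico 0 M).filter (fun t => T t = i)).card = x i := by
  classical
  have hH : ∀ t : ℕ, ∃ i : ℕ, t < prefSum x (i + 1) ∨ N - 1 ≤ i :=
    fun t => ⟨N - 1, Or.inr le_rfl⟩
  have hJle : ∀ t, Nat.find (hH t) ≤ N - 1 :=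
    fun t => Nat.find_le (Or.inr le_rfl)
  refine ⟨fun t => ⟨Nat.find (hH t), by have := hJle t; omega⟩, ?_, ?_⟩
  · intro t t' htt'
    show (Nat.find (hH t) : ℕ) ≤ Nat.find (hH t')
    apply Nat.find_mono
    intro i hi
    rcases hi with h | h
    · exact Or.inl (by omega)
    · exact Or.inr h
  · intro i
    have hchar : (Finset.Ico 0 M).filter
        (fun t => (⟨Nat.find (hH t), by have := hJle t; omega⟩ : Fin N) = i)
        = Finset.Ico (prefSum x i.val) (prefSum x (i.val + 1)) := by
      ext t
      simp only [Finset.mem_filter, Finset.mem_Ico]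
      constructor
      · rintro ⟨⟨-, htlt⟩, hTt⟩
        have hJt : Nat.find (hH t) = i.val := congrArg Fin.val hTt
        constructor
        · rcases Nat.eq_zero_or_pos i.val with h0 | h0
          · rw [h0]
            exact Nat.zero_le t
          · have hmin := Nat.find_min (hH t) (show i.val - 1 < Nat.find (hH t) by omega)
            push_neg at hmin
            have h1 : i.val - 1 + 1 = i.val := by omega
            rw [h1] at hmin
            exact hmin.1
        · rcases Nat.find_spec (hH t) with h | h
          · rw [hJt] at h
            exact h
          · have h2 : i.val = N - 1 := by have := hJle t; omega
            have h3 : i.val + 1 = N := by omega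
            rw [h3, prefSum_total, hx]
            exact htlt
      · rintro ⟨hlo, hhi⟩
        have htq : t < M := by
          have hle : prefSum x (i.val + 1) ≤ prefSum x N := prefSum_mono x (by omega)
          rw [prefSum_total, hx] at hle
          omega
        refine ⟨⟨Nat.zero_le t, htq⟩, ?_⟩
        apply Fin.ext
        show Nat.find (hH t) = i.val
        have hle : Nat.find (hH t) ≤ i.val := Nat.find_le (Or.inl hhi)
        by_contra hne
        have hlt : Nat.find (hH t) < i.val := by omega
        rcases Nat.find_spec (hH t) with h | h
        · have hmono : prefSum x (Nat.find (hH t) + 1) ≤ prefSum x i.val :=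
            prefSum_mono x (by omega)
          omega
        · have := i.isLt
          omega
    rw [hchar, Nat.card_Ico, prefSum_succ]
    omega

/-- Geometric sum identity in `ℕ`. -/
lemma geo_sum (q : ℕ) (hq : 1 ≤ q) (cc : ℕ) :
    (q - 1) * (∑ l ∈ Finset.range cc, q ^ l) + 1 = q ^ cc := by
  obtain ⟨e, rfl⟩ : ∃ e, q = e + 1 := ⟨q - 1, by omega⟩
  simp only [Nat.add_sub_cancel]
  induction cc with
  | zero => simp
  | succ d ihd =>
    rw [Finset.sum_range_succ, Nat.mul_add, Nat.add_right_comm, ihd, pow_succ]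
    ring

end DenomRed

/-- Denominator Reduction: any `(x₀/q^n, …, x_{N-1}/q^n)` is realizable from the
switch set `{v_k : 2 ≤ k ≤ q}` using at most
`(N-1)(q-1)(n - ⌈log_q N⌉) + q^{⌈log_q N⌉} - 1` pswitches. -/
theorem denominator_reduction (N : ℕ) (hN : 1 ≤ N) (q : ℕ) (hq : 2 ≤ q)
    (n : ℕ) (hn : Nat.clog q N ≤ n) (x : Fin N → ℕ) (hx : ∑ k, x k = q ^ n) :
    ∃ m ≤ (N - 1) * (q - 1) * (n - Nat.clog q N) + q ^ (Nat.clog q N) - 1,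
      Realizable {v : Fin N → ℝ | ∃ k : ℕ, 2 ≤ k ∧ k ≤ q ∧ v = qSwitch N k}
        (fun i => (x i : ℝ) / q ^ n) m := by
  classical
  obtain ⟨T, hTmono, hTcount⟩ := DenomRed.exists_tokenMap hN x (q ^ n) hx
  obtain ⟨m, hm, hr⟩ := DenomRed.chain hq hTmono n 0
  have hemp : DenomRed.empN T 0 (q ^ n) = fun i => (x i : ℝ) / q ^ n := by
    funext i
    unfold DenomRed.empN
    rw [Nat.zero_add, hTcount i]
    push_cast
    ring
  rw [hemp] at hr
  refine ⟨m, ?_, hr⟩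
  set c := Nat.clog q N with hcdef
  have hsle : ((T (0 + q ^ n - 1) : ℕ) - (T 0 : ℕ)) ≤ N - 1 := by
    have h1 := (T (0 + q ^ n - 1)).isLt
    omega
  have hmono_sum : (∑ l ∈ Finset.range n, min (q ^ l) ((T (0 + q ^ n - 1) : ℕ) - (T 0 : ℕ)))
      ≤ ∑ l ∈ Finset.range n, min (q ^ l) (N - 1) :=
    Finset.sum_le_sum fun l _ => by omega
  have hsplit : (∑ l ∈ Finset.Ico 0 c, min (q ^ l) (N - 1))
      + (∑ l ∈ Finset.Ico c n, min (q ^ l) (N - 1))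
      = ∑ l ∈ Finset.range n, min (q ^ l) (N - 1) := by
    rw [Finset.range_eq_Ico]
    exact Finset.sum_Ico_consecutive _ (by omega) hn
  have hp1 : (q - 1) * (∑ l ∈ Finset.Ico 0 c, min (q ^ l) (N - 1)) + 1 ≤ q ^ c := by
    have hle : (∑ l ∈ Finset.Ico 0 c, min (q ^ l) (N - 1))
        ≤ ∑ l ∈ Finset.Ico 0 c, q ^ l :=
      Finset.sum_le_sum fun l _ => min_le_left _ _
    have := DenomRed.geo_sum q (by omega) c
    rw [Finset.range_eq_Ico] at this
    have := Nat.mul_le_mul_left (q - 1) hle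
    omega
  have hp2 : (∑ l ∈ Finset.Ico c n, min (q ^ l) (N - 1)) ≤ (n - c) * (N - 1) := by
    calc (∑ l ∈ Finset.Ico c n, min (q ^ l) (N - 1))
        ≤ ∑ _l ∈ Finset.Ico c n, (N - 1) := Finset.sum_le_sum fun l _ => min_le_right _ _
      _ = (n - c) * (N - 1) := by rw [Finset.sum_const, Nat.card_Ico, smul_eq_mul]
  have hm2 : m ≤ (q - 1) * ((∑ l ∈ Finset.Ico 0 c, min (q ^ l) (N - 1))
      + ∑ l ∈ Finset.Ico c n, min (q ^ l) (N - 1)) := by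
    rw [hsplit]
    exact le_trans hm (Nat.mul_le_mul_left _ hmono_sum)
  rw [Nat.mul_add] at hm2
  have hp2' : (q - 1) * (∑ l ∈ Finset.Ico c n, min (q ^ l) (N - 1))
      ≤ (N - 1) * (q - 1) * (n - c) := by
    calc (q - 1) * (∑ l ∈ Finset.Ico c n, min (q ^ l) (N - 1))
        ≤ (q - 1) * ((n - c) * (N - 1)) := Nat.mul_le_mul_left _ hp2
      _ = (N - 1) * (q - 1) * (n - c) := by ring
  omega
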